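/- Let S = K[x_1,...,x_4] and I = ((x_1x_2)^{w_1}, x_2x_3, (x_3x_4)^{w_3}) with w_1 ≥ w_3 ≥ 2. Then for any t ≥ 2 and any 1 ≤ ℓ ≤ t-2, ((I^t : (x_2x_3)^ℓ) + (x_2x_3)) = ((x_1x_2)^{(t-ℓ)w_1}, x_2x_3, (x_3x_4)^{(t-ℓ)w_3}). -/

import Mathlib

open MvPolynomial

set_option maxHeartbeats 1000000 in
lemma span3_pow_le {R : Type*} [CommRing R] (a b c : R) (n : ℕ) :
    (Ideal.span {a, b, c}) ^ n ≤
      Ideal.span {x | ∃ i j k, i + j + k = n ∧ x = a ^ i * b ^ j * c ^ k} := by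
  induction n with
  | zero =>
    rw [pow_zero, Ideal.one_eq_top, top_le_iff, Ideal.eq_top_iff_one]
    exact Ideal.subset_span ⟨0, 0, 0, rfl, by simp⟩
  | succ n ih =>
    rw [pow_succ]
    refine le_trans (Ideal.mul_mono_left ih) ?_
    rw [Ideal.span_mul_span']
    apply Ideal.span_le.mpr
    rintro x hx
    obtain ⟨u, hu, v, hv, rfl⟩ := Set.mem_mul.mp hx
    obtain ⟨i, j, k, hn, rfl⟩ := hu
    simp only [Set.mem_insert_iff, Set.mem_singleton_iff] at hv
    rcases hv with rfl | rfl | rfl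
    · exact Ideal.subset_span ⟨i + 1, j, k, by omega, by ring⟩
    · exact Ideal.subset_span ⟨i, j + 1, k, by omega, by ring⟩
    · exact Ideal.subset_span ⟨i, j, k + 1, by omega, by ring⟩

lemma XX_pow (K : Type) [Field K] (u v : Fin 4) (n : ℕ) :
    (X u * X v : MvPolynomial (Fin 4) K) ^ n =
      monomial (Finsupp.single u n + Finsupp.single v n) 1 := by
  have h : (X u * X v : MvPolynomial (Fin 4) K)
      = monomial (Finsupp.single u 1 + Finsupp.single v 1) 1 := by
    rw [X, X, monomial_mul, one_mul]
  rw [h, monomial_pow, one_pow, smul_add, Finsupp.smul_single, Finsupp.smul_single,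
    smul_eq_mul, mul_one]

lemma support_pair {v : Fin 4 →₀ ℕ} {u1 u2 : Fin 4} {n1 n2 : ℕ}
    (hv : v = Finsupp.single u1 n1 + Finsupp.single u2 n2) {x : Fin 4}
    (hx : x ∈ v.support) : x = u1 ∨ x = u2 := by
  subst hv
  rcases Finset.mem_union.mp (Finsupp.support_add hx) with h | h
  · exact Or.inl (Finset.mem_singleton.mp (Finsupp.support_single_subset h))
  · exact Or.inr (Finset.mem_singleton.mp (Finsupp.support_single_subset h))

/-- for `I = ((x_1x_2)^{w_1}, x_2x_3, (x_3x_4)^{w_3})` with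
`w_1 ≥ w_3 ≥ 2`, for `t ≥ 2` and `1 ≤ ℓ ≤ t-2`:
`(I^t : (x_2x_3)^ℓ) + (x_2x_3) = ((x_1x_2)^{(t-ℓ)w_1}, x_2x_3, (x_3x_4)^{(t-ℓ)w_3})`. -/
theorem path4_colon_middle_sup (K : Type) [Field K] (w1 w3 : ℕ)
    (hw3 : 2 ≤ w3) (h13 : w3 ≤ w1) (t : ℕ) (ht : 2 ≤ t)
    (l : ℕ) (hl1 : 1 ≤ l) (hl2 : l ≤ t - 2)
    (I : Ideal (MvPolynomial (Fin 4) K))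
    (hI : I = Ideal.span {(X 0 * X 1) ^ w1, X 1 * X 2, (X 2 * X 3) ^ w3}) :
    ((I ^ t).colon ((Ideal.span {(X 1 * X 2) ^ l} : Ideal (MvPolynomial (Fin 4) K)) : Set (MvPolynomial (Fin 4) K))) ⊔ Ideal.span {X 1 * X 2} =
      Ideal.span {(X 0 * X 1) ^ ((t - l) * w1), X 1 * X 2,
        (X 2 * X 3) ^ ((t - l) * w3)} := by
  subst hI
  set a : MvPolynomial (Fin 4) K := (X 0 * X 1) ^ w1 with ha
  set b : MvPolynomial (Fin 4) K := X 1 * X 2 with hb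
  set c : MvPolynomial (Fin 4) K := (X 2 * X 3) ^ w3 with hc
  have hlt : l ≤ t := by omega
  -- exponent vectors
  set E : ℕ → ℕ → ℕ → (Fin 4 →₀ ℕ) := fun i j k =>
    (Finsupp.single 0 (w1 * i) + Finsupp.single 1 (w1 * i)) +
    (Finsupp.single 1 j + Finsupp.single 2 j) +
    (Finsupp.single 2 (w3 * k) + Finsupp.single 3 (w3 * k)) with hE
  have hmono : ∀ i j k : ℕ, a ^ i * b ^ j * c ^ k = monomial (E i j k) 1 := by
    intro i j k
    rw [ha, hb, hc, ← pow_mul, ← pow_mul, XX_pow, XX_pow, XX_pow, monomial_mul, monomial_mul,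
      one_mul, one_mul, hE]
  set EA : Fin 4 →₀ ℕ := Finsupp.single 0 ((t - l) * w1) + Finsupp.single 1 ((t - l) * w1)
    with hEA
  set EB : Fin 4 →₀ ℕ := Finsupp.single 1 1 + Finsupp.single 2 1 with hEB
  set EC : Fin 4 →₀ ℕ := Finsupp.single 2 ((t - l) * w3) + Finsupp.single 3 ((t - l) * w3)
    with hEC
  have hga : (X 0 * X 1 : MvPolynomial (Fin 4) K) ^ ((t - l) * w1) = monomial EA 1 :=
    XX_pow K 0 1 _
  have hgb : (X 1 * X 2 : MvPolynomial (Fin 4) K) = monomial EB 1 := by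
    rw [← pow_one (X 1 * X 2 : MvPolynomial (Fin 4) K), XX_pow]
  have hgc : (X 2 * X 3 : MvPolynomial (Fin 4) K) ^ ((t - l) * w3) = monomial EC 1 :=
    XX_pow K 2 3 _
  have hRHS : (Ideal.span {(X 0 * X 1) ^ ((t - l) * w1), X 1 * X 2,
        (X 2 * X 3) ^ ((t - l) * w3)} : Ideal (MvPolynomial (Fin 4) K)) =
      Ideal.span ((fun s => monomial s (1 : K)) '' {EA, EB, EC}) := by
    rw [hga, hgb, hgc]
    congr 1
    simp [Set.image_insert_eq]
  apply le_antisymm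
  · apply sup_le
    · -- colon ⊆ RHS
      intro f hf
      rw [Ideal.mem_colon_span_singleton] at hf
      have hfmem : f * b ^ l ∈ Ideal.span ((fun s => monomial s (1 : K)) ''
          {s | ∃ i j k, i + j + k = t ∧ s = E i j k}) := by
        have h1 := span3_pow_le a b c t hf
        have hsets : {x : MvPolynomial (Fin 4) K | ∃ i j k, i + j + k = t ∧
            x = a ^ i * b ^ j * c ^ k} =
            (fun s => monomial s (1 : K)) '' {s | ∃ i j k, i + j + k = t ∧ s = E i j k} := by
          ext x
          constructor
          · rintro ⟨i, j, k, hsum, rfl⟩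
            exact ⟨E i j k, ⟨i, j, k, hsum, rfl⟩, (hmono i j k).symm⟩
          · rintro ⟨s, ⟨i, j, k, hsum, rfl⟩, rfl⟩
            exact ⟨i, j, k, hsum, (hmono i j k).symm⟩
        rwa [hsets] at h1
      set D : Fin 4 →₀ ℕ := Finsupp.single 1 l + Finsupp.single 2 l with hD
      have hbD : b ^ l = monomial D 1 := XX_pow K 1 2 l
      rw [hbD] at hfmem
      rw [hRHS, mem_ideal_span_monomial_image]
      intro m hm
      have hmD : m + D ∈ (f * monomial D 1).support := by
        rw [mem_support_iff] at hm ⊢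
        rw [coeff_mul_monomial, mul_one]
        exact hm
      obtain ⟨s, ⟨i, j, k, hsum, rfl⟩, hle⟩ :=
        mem_ideal_span_monomial_image.mp hfmem _ hmD
      rw [Finsupp.le_def] at hle
      have h0 : w1 * i ≤ m 0 := by
        have := hle 0; simp [hE, hD, Finsupp.single_apply] at this; omega
      have h1 : w1 * i + j ≤ m 1 + l := by
        have := hle 1; simp [hE, hD, Finsupp.single_apply] at this; omega
      have h2 : j + w3 * k ≤ m 2 + l := by
        have := hle 2; simp [hE, hD, Finsupp.single_apply] at this; omega
      have h3 : w3 * k ≤ m 3 := by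
        have := hle 3; simp [hE, hD, Finsupp.single_apply] at this; omega
      have hw2k : 2 * k ≤ w3 * k := Nat.mul_le_mul_right k hw3
      have hw2i : 2 * i ≤ w1 * i := Nat.mul_le_mul_right i (le_trans hw3 h13)
      have hEA0 : EA (0 : Fin 4) = (t - l) * w1 := by simp [hEA, Finsupp.single_apply]
      have hEA1 : EA (1 : Fin 4) = (t - l) * w1 := by simp [hEA, Finsupp.single_apply]
      have hEB1 : EB (1 : Fin 4) = 1 := by simp [hEB, Finsupp.single_apply]
      have hEB2 : EB (2 : Fin 4) = 1 := by simp [hEB, Finsupp.single_apply]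
      have hEC2 : EC (2 : Fin 4) = (t - l) * w3 := by simp [hEC, Finsupp.single_apply]
      have hEC3 : EC (3 : Fin 4) = (t - l) * w3 := by simp [hEC, Finsupp.single_apply]
      by_cases hm2 : m 2 = 0
      · -- EA works
        refine ⟨EA, by simp, ?_⟩
        have hjkl : j + w3 * k ≤ l := by omega
        have hitl : t - l ≤ i := by omega
        have hia : i = (t - l) + (l - j - k) := by omega
        have hdw : 2 * (l - j - k) ≤ w1 * (l - j - k) :=
          Nat.mul_le_mul_right _ (le_trans hw3 h13)
        have hsplit : w1 * i = w1 * (t - l) + w1 * (l - j - k) := by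
          rw [hia, Nat.mul_add]
        have hcomm : (t - l) * w1 = w1 * (t - l) := mul_comm _ _
        have hA0 : (t - l) * w1 ≤ m 0 := by omega
        have hA1 : (t - l) * w1 ≤ m 1 := by omega
        rw [Finsupp.le_iff]
        intro x hx
        rcases support_pair hEA hx with rfl | rfl
        · rw [hEA0]; exact hA0
        · rw [hEA1]; exact hA1
      · by_cases hm1 : m 1 = 0
        · -- EC works
          refine ⟨EC, by simp, ?_⟩
          have hijl : w1 * i + j ≤ l := by omega
          have hktl : t - l ≤ k := by omega
          have hka : k = (t - l) + (l - i - j) := by omega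
          have hdw : 2 * (l - i - j) ≤ w3 * (l - i - j) := Nat.mul_le_mul_right _ hw3
          have hsplit : w3 * k = w3 * (t - l) + w3 * (l - i - j) := by
            rw [hka, Nat.mul_add]
          have hcomm : (t - l) * w3 = w3 * (t - l) := mul_comm _ _
          have hC2 : (t - l) * w3 ≤ m 2 := by omega
          have hC3 : (t - l) * w3 ≤ m 3 := by omega
          rw [Finsupp.le_iff]
          intro x hx
          rcases support_pair hEC hx with rfl | rfl
          · rw [hEC2]; exact hC2
          · rw [hEC3]; exact hC3
        · -- EB works
          refine ⟨EB, by simp, ?_⟩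
          rw [Finsupp.le_iff]
          intro x hx
          rcases support_pair hEB hx with rfl | rfl
          · rw [hEB1]; omega
          · rw [hEB2]; omega
    · -- (b) ⊆ RHS
      rw [Ideal.span_le]
      rintro x rfl
      exact Ideal.subset_span (by simp)
  · -- RHS ⊆ LHS
    rw [Ideal.span_le]
    have haI : a ∈ Ideal.span {a, b, c} := Ideal.subset_span (by simp)
    have hbI : b ∈ Ideal.span {a, b, c} := Ideal.subset_span (by simp)
    have hcI : c ∈ Ideal.span {a, b, c} := Ideal.subset_span (by simp)
    intro x hx
    simp only [Set.mem_insert_iff, Set.mem_singleton_iff] at hx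
    rcases hx with rfl | rfl | rfl
    · apply Ideal.mem_sup_left
      rw [Ideal.mem_colon_span_singleton]
      have heq : (X 0 * X 1 : MvPolynomial (Fin 4) K) ^ ((t - l) * w1) * b ^ l =
          a ^ (t - l) * b ^ l := by rw [ha, ← pow_mul, mul_comm w1]
      rw [heq]
      have hmul : a ^ (t - l) * b ^ l ∈
          Ideal.span {a, b, c} ^ (t - l) * Ideal.span {a, b, c} ^ l :=
        Ideal.mul_mem_mul (Ideal.pow_mem_pow haI _) (Ideal.pow_mem_pow hbI _)
      rwa [← pow_add, Nat.sub_add_cancel hlt] at hmul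
    · apply Ideal.mem_sup_right
      exact Ideal.mem_span_singleton_self _
    · apply Ideal.mem_sup_left
      rw [Ideal.mem_colon_span_singleton]
      have heq : (X 2 * X 3 : MvPolynomial (Fin 4) K) ^ ((t - l) * w3) * b ^ l =
          c ^ (t - l) * b ^ l := by rw [hc, ← pow_mul, mul_comm w3]
      rw [heq]
      have hmul : c ^ (t - l) * b ^ l ∈
          Ideal.span {a, b, c} ^ (t - l) * Ideal.span {a, b, c} ^ l :=
        Ideal.mul_mem_mul (Ideal.pow_mem_pow hcI _) (Ideal.pow_mem_pow hbI _)
      rwa [← pow_add, Nat.sub_add_cancel hlt] at hmul
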